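/- Let s, g ∈ ℝ and define Ã_H(q,p) := (q₁p₂ − q₂p₁)·p₂ − s·q₁/√(q₁² + q₂²) + (g/2)·q₁·q₂² for q ∈ ℝ² \ {0}, p ∈ ℝ². Then: (i) for every twice-differentiable curve q : I → ℝ² \ {0} satisfying the frozen-Hill equations q₁''(t) = −s·q₁(t)/‖q(t)‖³ + 2g·q₁(t) and q₂''(t) = −s·q₂(t)/‖q(t)‖³ + (g/2)·q₂(t), the function t ↦ Ã_H(q(t), q'(t)) is constant; (ii) for every c ≠ 0 and every point q ≠ 0 on either focused parabola {q₁ = c² − q₂²/(4c²)} or {q₁ = q₂²/(4c²) − c²}, the elastic reflection p' of any p ∈ ℝ² at that parabola at q satisfies Ã_H(q,p') = Ã_H(q,p). Hence the frozen Hill problem with centrifugal correction admits any focused parabola with the q₁-axis as its axis as an integrable reflection wall. -/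

import Mathlib

/-- The frozen-Hill first integral
`Ã_H(q,p) = (q₁p₂ − q₂p₁)·p₂ − s·q₁/√(q₁²+q₂²) + (g/2)·q₁·q₂²`. -/
noncomputable def hillA (s g : ℝ) (q p : ℝ × ℝ) : ℝ :=
  (q.1 * p.2 - q.2 * p.1) * p.2 - s * q.1 / Real.sqrt (q.1 ^ 2 + q.2 ^ 2)
    + g / 2 * q.1 * q.2 ^ 2

set_option maxHeartbeats 1000000 in
/-- The frozen Hill problem with centrifugal correction
`q₁'' = −s·q₁/‖q‖³ + 2g·q₁, q₂'' = −s·q₂/‖q‖³ + (g/2)·q₂` admits any focused parabola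
with the `q₁`-axis as its axis as an integrable reflection wall: `Ã_H` is constant
along its trajectories and invariant under elastic reflections at the focused
parabolae `{q₁ = c² − q₂²/(4c²)}` and `{q₁ = q₂²/(4c²) − c²}`. -/
theorem stmt_16 (s g : ℝ) :
    (∀ I : Set ℝ, Convex ℝ I → ∀ q v : ℝ → ℝ × ℝ,
      (∀ t ∈ I, q t ≠ 0) →
      (∀ t ∈ I, HasDerivWithinAt q (v t) I t) →
      (∀ t ∈ I, HasDerivWithinAt v
        ((-(s * (q t).1 / Real.sqrt ((q t).1 ^ 2 + (q t).2 ^ 2) ^ 3) + 2 * g * (q t).1,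
          -(s * (q t).2 / Real.sqrt ((q t).1 ^ 2 + (q t).2 ^ 2) ^ 3)
            + g / 2 * (q t).2) : ℝ × ℝ) I t) →
      ∀ t ∈ I, ∀ t' ∈ I, hillA s g (q t) (v t) = hillA s g (q t') (v t')) ∧
    (∀ c : ℝ, c ≠ 0 → ∀ q p : ℝ × ℝ, q ≠ 0 →
      q.1 = c ^ 2 - q.2 ^ 2 / (4 * c ^ 2) →
      ∀ n p' : ℝ × ℝ, n = (1, q.2 / (2 * c ^ 2)) →
      p' = p - (2 * ((p.1 * n.1 + p.2 * n.2) / (n.1 ^ 2 + n.2 ^ 2))) • n →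
      hillA s g q p' = hillA s g q p) ∧
    (∀ c : ℝ, c ≠ 0 → ∀ q p : ℝ × ℝ, q ≠ 0 →
      q.1 = q.2 ^ 2 / (4 * c ^ 2) - c ^ 2 →
      ∀ n p' : ℝ × ℝ, n = (1, -q.2 / (2 * c ^ 2)) →
      p' = p - (2 * ((p.1 * n.1 + p.2 * n.2) / (n.1 ^ 2 + n.2 ^ 2))) • n →
      hillA s g q p' = hillA s g q p) := by
  refine ⟨?_, ?_, ?_⟩
  · intro I hI q v hq0 hq hv
    have key : ∀ u ∈ I, HasDerivWithinAt (fun t => hillA s g (q t) (v t)) 0 I u := by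
      intro u hu
      have hpos : 0 < (q u).1 ^ 2 + (q u).2 ^ 2 := by
        rcases eq_or_ne (q u).1 0 with h1 | h1
        · have h2 : (q u).2 ≠ 0 := fun h2 => hq0 u hu (Prod.ext h1 h2)
          positivity
        · positivity
      set x1 := (q u).1 with hx1
      set x2 := (q u).2 with hx2
      set w1 := (v u).1 with hw1
      set w2 := (v u).2 with hw2
      set r := Real.sqrt (x1 ^ 2 + x2 ^ 2) with hrdef
      have hrpos : 0 < r := Real.sqrt_pos.mpr hpos
      have hr2 : r ^ 2 = x1 ^ 2 + x2 ^ 2 := Real.sq_sqrt hpos.le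
      set a1 := -(s * x1 / r ^ 3) + 2 * g * x1 with ha1
      set a2 := -(s * x2 / r ^ 3) + g / 2 * x2 with ha2
      have h1 : HasDerivWithinAt (fun t => (q t).1) w1 I u := (hq u hu).fst
      have h2 : HasDerivWithinAt (fun t => (q t).2) w2 I u := (hq u hu).snd
      have hv1 : HasDerivWithinAt (fun t => (v t).1) a1 I u := (hv u hu).fst
      have hv2 : HasDerivWithinAt (fun t => (v t).2) a2 I u := (hv u hu).snd
      have hqsum : HasDerivWithinAt (fun t => (q t).1 ^ 2 + (q t).2 ^ 2)
          (2 * x1 * w1 + 2 * x2 * w2) I u := by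
        have := (h1.pow 2).add (h2.pow 2)
        refine this.congr_deriv (Eq.symm ?_)
        push_cast
        ring
      have hrd : HasDerivWithinAt (fun t => Real.sqrt ((q t).1 ^ 2 + (q t).2 ^ 2))
          ((x1 * w1 + x2 * w2) / r) I u := by
        have := (Real.hasDerivAt_sqrt hpos.ne').comp_hasDerivWithinAt u hqsum
        refine this.congr_deriv (Eq.symm ?_)
        rw [← hrdef]
        field_simp
      have hA : HasDerivWithinAt (fun t => ((q t).1 * (v t).2 - (q t).2 * (v t).1) * (v t).2)
          ((w1 * w2 + x1 * a2 - (w2 * w1 + x2 * a1)) * w2 + (x1 * w2 - x2 * w1) * a2) I u :=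
        ((h1.mul hv2).sub (h2.mul hv1)).mul hv2
      have hB : HasDerivWithinAt (fun t => s * (q t).1 / Real.sqrt ((q t).1 ^ 2 + (q t).2 ^ 2))
          ((s * w1 * r - s * x1 * ((x1 * w1 + x2 * w2) / r)) / r ^ 2) I u :=
        (h1.const_mul s).div hrd hrpos.ne'
      have hC : HasDerivWithinAt (fun t => g / 2 * (q t).1 * (q t).2 ^ 2)
          (g / 2 * w1 * x2 ^ 2 + g / 2 * x1 * (2 * x2 * w2)) I u := by
        have := (h1.const_mul (g / 2)).mul (h2.pow 2)
        refine this.congr_deriv (Eq.symm ?_)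
        push_cast
        simp only [Pi.pow_apply, hx1, hx2]
        ring
      have hcomb := (hA.sub hB).add hC
      have heq : (fun t => hillA s g (q t) (v t)) =
          fun t => ((q t).1 * (v t).2 - (q t).2 * (v t).1) * (v t).2
            - s * (q t).1 / Real.sqrt ((q t).1 ^ 2 + (q t).2 ^ 2)
            + g / 2 * (q t).1 * (q t).2 ^ 2 := rfl
      rw [heq]
      refine hcomb.congr_deriv (Eq.symm ?_)
      rw [ha1, ha2]
      field_simp
      linear_combination (2 * s * w1) * hr2
    intro t ht t' ht'
    have := Convex.norm_image_sub_le_of_norm_hasDerivWithin_le (C := 0) key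
      (fun u hu => by simp) hI ht' ht
    simp only [norm_zero, zero_mul] at this
    have := le_antisymm this (norm_nonneg _)
    exact sub_eq_zero.mp (by simpa using this)
  · intro c hc q p hq0 hq1 n p' hn hp'
    subst hn hp'
    simp only [hillA, Prod.fst_sub, Prod.snd_sub, Prod.smul_fst, Prod.smul_snd, smul_eq_mul]
    congr 1
    congr 1
    rw [hq1]
    have hd : (1:ℝ) ^ 2 + (q.2 / (2 * c ^ 2)) ^ 2 ≠ 0 := by positivity
    field_simp
    ring
  · intro c hc q p hq0 hq1 n p' hn hp'
    subst hn hp'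
    simp only [hillA, Prod.fst_sub, Prod.snd_sub, Prod.smul_fst, Prod.smul_snd, smul_eq_mul,
      neg_div]
    congr 1
    congr 1
    rw [hq1]
    have hd : (1:ℝ) ^ 2 + (q.2 / (2 * c ^ 2)) ^ 2 ≠ 0 := by positivity
    field_simp
    ring
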